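/- Let p be an odd prime and let L_p be the p×p Laplacian minor of the leafed p-cycle. Then for every natural number t, the number of integer vectors λ ∈ ℤᵖ with λ₀ = p·t and L_p·λ ≥ 0 componentwise equals the number of integer vectors λ ∈ ℤᵖ with λ₀ = p·(t+1) and every entry of L_p·λ at least 1 (i.e. L_p·λ > 0 componentwise). (This is the Ehrhart-theoretic characterization — lattice points of the t-th dilate equal interior lattice points of the (t+1)-st dilate — of the fact that the simplex lCP_p, obtained by intersecting the cone {λ : L_p·λ ≥ 0} with the hyperplane λ₀ = p, is a reflexive polytope after translation by an integral vector.) -/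
import Mathlib

set_option maxHeartbeats 1000000

/-- The Laplacian minor (at the leaf) of the leafed `p`-cycle, over `ℤ`:
`(L_p)₀₀ = 3`, diagonal `2` elsewhere, `−1` between cyclically adjacent vertices. -/
def leafedCycleLaplacianMinor (p : ℕ) : Matrix (Fin p) (Fin p) ℤ :=
  Matrix.of fun i j =>
    if i = j then (if i.val = 0 then 3 else 2)
    else if i.val + 1 = j.val ∨ j.val + 1 = i.val ∨
        (i.val = 0 ∧ j.val = p - 1) ∨ (j.val = 0 ∧ i.val = p - 1) then -1
    else 0

/-- The translation vector: `c i = p + i (p - i) / 2`. -/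
def lcCvec (p : ℕ) : Fin p → ℤ :=
  fun i => (2 * (p : ℤ) + (i.val : ℤ) * ((p : ℤ) - (i.val : ℤ))) / 2

lemma lc_even_aux (p : ℕ) (hodd : Odd p) (k : ℤ) :
    2 ∣ 2 * (p : ℤ) + k * ((p : ℤ) - k) := by
  have hp : Odd (p : ℤ) := by exact_mod_cast hodd
  rcases Int.even_or_odd k with hk | hk
  · exact dvd_add (dvd_mul_right 2 _) (Dvd.dvd.mul_right hk.two_dvd _)
  · have h2 : Even ((p : ℤ) - k) := hp.sub_odd hk
    exact dvd_add (dvd_mul_right 2 _) (Dvd.dvd.mul_left h2.two_dvd _)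

lemma lc_two_mul_cvec (p : ℕ) (hodd : Odd p) (i : Fin p) :
    2 * lcCvec p i = 2 * (p : ℤ) + (i.val : ℤ) * ((p : ℤ) - (i.val : ℤ)) :=
  Int.mul_ediv_cancel' (lc_even_aux p hodd _)

lemma lc_sum_three {n : ℕ} (f : Fin n → ℤ) (a b c : Fin n)
    (hab : a ≠ b) (hac : a ≠ c) (hbc : b ≠ c)
    (h0 : ∀ j, j ≠ a → j ≠ b → j ≠ c → f j = 0) :
    ∑ j, f j = f a + f b + f c := by
  rw [← Finset.sum_subset (Finset.subset_univ ({a, b, c} : Finset (Fin n)))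
      (fun j _ hj => by
        simp only [Finset.mem_insert, Finset.mem_singleton, not_or] at hj
        exact h0 j hj.1 hj.2.1 hj.2.2)]
  rw [Finset.sum_insert (by simp [hab, hac]),
    Finset.sum_insert (by simp [hbc]), Finset.sum_singleton, add_assoc]

lemma lc_mulVec_cvec (p : ℕ) (hp3 : 3 ≤ p) (hodd : Odd p) (i : Fin p) :
    (leafedCycleLaplacianMinor p).mulVec (lcCvec p) i = 1 := by
  apply mul_left_cancel₀ (two_ne_zero (α := ℤ))
  have hmv : (leafedCycleLaplacianMinor p).mulVec (lcCvec p) i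
      = ∑ j, leafedCycleLaplacianMinor p i j * lcCvec p j := rfl
  rw [hmv, Finset.mul_sum]
  simp_rw [mul_left_comm (2 : ℤ), lc_two_mul_cvec p hodd]
  set f : Fin p → ℤ := fun j =>
    leafedCycleLaplacianMinor p i j *
      (2 * (p : ℤ) + (j.val : ℤ) * ((p : ℤ) - (j.val : ℤ))) with hf
  have hiv := i.isLt
  rcases Nat.lt_or_ge i.val 1 with h0 | h1
  · -- i.val = 0
    have hi0 : i.val = 0 := by omega
    have hLa : leafedCycleLaplacianMinor p i ⟨0, by omega⟩ = 3 := by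
      simp only [leafedCycleLaplacianMinor, Matrix.of_apply, Fin.ext_iff, Fin.val_mk,
        and_true, true_and, or_true, true_or, if_true]
      first
      | rfl
      | (split_ifs <;> omega)
    have hLb : leafedCycleLaplacianMinor p i ⟨1, by omega⟩ = -1 := by
      simp only [leafedCycleLaplacianMinor, Matrix.of_apply, Fin.ext_iff, Fin.val_mk,
        and_true, true_and, or_true, true_or, if_true]
      first
      | rfl
      | (split_ifs <;> omega)
    have hLc : leafedCycleLaplacianMinor p i ⟨p - 1, by omega⟩ = -1 := by
      simp only [leafedCycleLaplacianMinor, Matrix.of_apply, Fin.ext_iff, Fin.val_mk,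
        and_true, true_and, or_true, true_or, if_true]
      first
      | rfl
      | (split_ifs <;> omega)
    have hsum : ∑ j, f j = f ⟨0, by omega⟩ + f ⟨1, by omega⟩ + f ⟨p - 1, by omega⟩ := by
      apply lc_sum_three
      · exact Fin.ne_of_val_ne (by simp only [Fin.val_mk]; omega)
      · exact Fin.ne_of_val_ne (by simp only [Fin.val_mk]; omega)
      · exact Fin.ne_of_val_ne (by simp only [Fin.val_mk]; omega)
      · intro j hja hjb hjc
        simp only [Ne, Fin.ext_iff, Fin.val_mk] at hja hjb hjc
        have hjv := j.isLt
        have hL0 : leafedCycleLaplacianMinor p i j = 0 := by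
          simp only [leafedCycleLaplacianMinor, Matrix.of_apply, Fin.ext_iff,
            and_true, true_and, or_true, true_or, if_true]
          first
          | rfl
          | (split_ifs <;> omega)
        simp only [hf, hL0, zero_mul]
    rw [hsum]
    simp only [hf, Fin.val_mk]
    rw [hLa, hLb, hLc]
    have hcast : (((p - 1 : ℕ) : ℤ)) = (p : ℤ) - 1 := by omega
    rw [hcast]
    push_cast
    ring
  · rcases Nat.lt_or_ge i.val (p - 1) with h2 | h2
    · -- middle case: 1 ≤ i.val ≤ p - 2
      have hLa : leafedCycleLaplacianMinor p i ⟨i.val - 1, by omega⟩ = -1 := by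
        simp only [leafedCycleLaplacianMinor, Matrix.of_apply, Fin.ext_iff, Fin.val_mk,
          and_true, true_and, or_true, true_or, if_true]
        first
        | rfl
        | (split_ifs <;> omega)
      have hLb : leafedCycleLaplacianMinor p i i = 2 := by
        simp only [leafedCycleLaplacianMinor, Matrix.of_apply, Fin.ext_iff, Fin.val_mk,
          and_true, true_and, or_true, true_or, if_true]
        first
        | rfl
        | (split_ifs <;> omega)
      have hLc : leafedCycleLaplacianMinor p i ⟨i.val + 1, by omega⟩ = -1 := by
        simp only [leafedCycleLaplacianMinor, Matrix.of_apply, Fin.ext_iff, Fin.val_mk,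
          and_true, true_and, or_true, true_or, if_true]
        first
        | rfl
        | (split_ifs <;> omega)
      have hsum : ∑ j, f j = f ⟨i.val - 1, by omega⟩ + f i + f ⟨i.val + 1, by omega⟩ := by
        apply lc_sum_three
        · exact Fin.ne_of_val_ne (by simp only [Fin.val_mk]; omega)
        · exact Fin.ne_of_val_ne (by simp only [Fin.val_mk]; omega)
        · exact Fin.ne_of_val_ne (by simp only [Fin.val_mk]; omega)
        · intro j hja hjb hjc
          simp only [Ne, Fin.ext_iff, Fin.val_mk] at hja hjb hjc
          have hjv := j.isLt
          have hL0 : leafedCycleLaplacianMinor p i j = 0 := by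
            simp only [leafedCycleLaplacianMinor, Matrix.of_apply, Fin.ext_iff,
              and_true, true_and, or_true, true_or, if_true]
            first
            | rfl
            | (split_ifs <;> omega)
          simp only [hf, hL0, zero_mul]
      rw [hsum]
      simp only [hf, Fin.val_mk]
      rw [hLa, hLb, hLc]
      have hcast : (((i.val - 1 : ℕ) : ℤ)) = (i.val : ℤ) - 1 := by omega
      rw [hcast]
      push_cast
      ring
    · -- i.val = p - 1
      have hip : i.val = p - 1 := by omega
      have hLa : leafedCycleLaplacianMinor p i ⟨0, by omega⟩ = -1 := by
        simp only [leafedCycleLaplacianMinor, Matrix.of_apply, Fin.ext_iff, Fin.val_mk,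
          and_true, true_and, or_true, true_or, if_true]
        first
        | rfl
        | (split_ifs <;> omega)
      have hLb : leafedCycleLaplacianMinor p i ⟨p - 2, by omega⟩ = -1 := by
        simp only [leafedCycleLaplacianMinor, Matrix.of_apply, Fin.ext_iff, Fin.val_mk,
          and_true, true_and, or_true, true_or, if_true]
        first
        | rfl
        | (split_ifs <;> omega)
      have hLc : leafedCycleLaplacianMinor p i ⟨p - 1, by omega⟩ = 2 := by
        simp only [leafedCycleLaplacianMinor, Matrix.of_apply, Fin.ext_iff, Fin.val_mk,
          and_true, true_and, or_true, true_or, if_true]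
        first
        | rfl
        | (split_ifs <;> omega)
      have hsum : ∑ j, f j = f ⟨0, by omega⟩ + f ⟨p - 2, by omega⟩ + f ⟨p - 1, by omega⟩ := by
        apply lc_sum_three
        · exact Fin.ne_of_val_ne (by simp only [Fin.val_mk]; omega)
        · exact Fin.ne_of_val_ne (by simp only [Fin.val_mk]; omega)
        · exact Fin.ne_of_val_ne (by simp only [Fin.val_mk]; omega)
        · intro j hja hjb hjc
          simp only [Ne, Fin.ext_iff, Fin.val_mk] at hja hjb hjc
          have hjv := j.isLt
          have hL0 : leafedCycleLaplacianMinor p i j = 0 := by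
            simp only [leafedCycleLaplacianMinor, Matrix.of_apply, Fin.ext_iff,
              and_true, true_and, or_true, true_or, if_true]
            first
            | rfl
            | (split_ifs <;> omega)
          simp only [hf, hL0, zero_mul]
      rw [hsum]
      simp only [hf, Fin.val_mk]
      simp only [hLa, hLb, hLc]
      have hcast1 : (((p - 1 : ℕ) : ℤ)) = (p : ℤ) - 1 := by omega
      have hcast2 : (((p - 2 : ℕ) : ℤ)) = (p : ℤ) - 2 := by omega
      rw [hcast1, hcast2]
      push_cast
      ring

lemma lc_cvec_zero (p : ℕ) (hp0 : 0 < p) (hodd : Odd p) :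
    lcCvec p ⟨0, hp0⟩ = (p : ℤ) := by
  apply mul_left_cancel₀ (two_ne_zero (α := ℤ))
  rw [lc_two_mul_cvec p hodd]
  simp

/-- For an odd prime `p`, the simplex `lCP_p` is reflexive (after an
integral translation): for every `t`, the number of lattice points of the `t`-th
dilate equals the number of interior lattice points of the `(t+1)`-st dilate. -/
theorem leafed_cycle_slice_reflexive (p : ℕ) (hp : p.Prime) (hodd : Odd p)
    (t : ℕ) :
    {lam : Fin p → ℤ |
        (∀ i, 0 ≤ (leafedCycleLaplacianMinor p).mulVec lam i) ∧
        lam ⟨0, hp.pos⟩ = (p : ℤ) * (t : ℤ)}.ncard =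
      {lam : Fin p → ℤ |
        (∀ i, 1 ≤ (leafedCycleLaplacianMinor p).mulVec lam i) ∧
        lam ⟨0, hp.pos⟩ = (p : ℤ) * ((t : ℤ) + 1)}.ncard := by
  have hp3 : 3 ≤ p := by
    have h2 := hp.two_le
    have := Nat.odd_iff.mp hodd
    omega
  have hkey := lc_mulVec_cvec p hp3 hodd
  have hc0 := lc_cvec_zero p hp.pos hodd
  have himg : {lam : Fin p → ℤ |
        (∀ i, 1 ≤ (leafedCycleLaplacianMinor p).mulVec lam i) ∧
        lam ⟨0, hp.pos⟩ = (p : ℤ) * ((t : ℤ) + 1)}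
      = (fun lam => lam + lcCvec p) '' {lam : Fin p → ℤ |
        (∀ i, 0 ≤ (leafedCycleLaplacianMinor p).mulVec lam i) ∧
        lam ⟨0, hp.pos⟩ = (p : ℤ) * (t : ℤ)} := by
    ext mu
    simp only [Set.mem_image, Set.mem_setOf_eq]
    constructor
    · rintro ⟨h1, h2⟩
      refine ⟨mu - lcCvec p, ⟨fun i => ?_, ?_⟩, by abel⟩
      · rw [Matrix.mulVec_sub, Pi.sub_apply, hkey]
        have := h1 i
        omega
      · rw [Pi.sub_apply, h2, hc0]; ring
    · rintro ⟨lam, ⟨h1, h2⟩, rfl⟩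
      refine ⟨fun i => ?_, ?_⟩
      · rw [Matrix.mulVec_add, Pi.add_apply, hkey]
        have := h1 i
        omega
      · rw [Pi.add_apply, h2, hc0]; ring
  rw [himg, Set.ncard_image_of_injective _ (add_left_injective (lcCvec p))]
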